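/- arXiv:0707.3852 — 2 statements merged into one kernel-verified Lean document; each statement's English description precedes it below -/
import Mathlib

section
/- Let M and N be d×d matrices such that M and M+N are diagonalizable. Then the eigenvalues of I_n ⊗ M + (E_n/n) ⊗ N (with multiplicity) are the eigenvalues of M, each with multiplicity n−1, together with the eigenvalues of M+N. -/
open Matrix Polynomial
open scoped Kronecker

section Aux
variable {m : Type*} [Fintype m] [DecidableEq m]

lemma my_charpoly_conj (Q R A : Matrix m m ℂ) (h1 : R * Q = 1) :
    (R * A * Q).charpoly = A.charpoly := by
  have hs : Matrix.scalar m (X : ℂ[X]) = (X : ℂ[X]) • (1 : Matrix m m ℂ[X]) := by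
    ext i j
    by_cases h : i = j <;>
      simp [Matrix.scalar_apply, Matrix.one_apply, Matrix.diagonal_apply, h]
  have hc : charmatrix (R * A * Q) =
      (C : ℂ →+* ℂ[X]).mapMatrix R * charmatrix A * (C : ℂ →+* ℂ[X]).mapMatrix Q := by
    simp only [charmatrix, hs, mul_sub, sub_mul, _root_.map_mul]
    congr 1
    rw [mul_smul_comm, mul_one, smul_mul_assoc, ← _root_.map_mul, h1, _root_.map_one]
  rw [Matrix.charpoly, Matrix.charpoly, hc, det_mul, det_mul]
  have : ((C : ℂ →+* ℂ[X]).mapMatrix R).det * ((C : ℂ →+* ℂ[X]).mapMatrix Q).det = 1 := by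
    rw [← det_mul, ← _root_.map_mul, h1, _root_.map_one, det_one]
  calc ((C : ℂ →+* ℂ[X]).mapMatrix R).det * (charmatrix A).det *
        ((C : ℂ →+* ℂ[X]).mapMatrix Q).det
      = ((C : ℂ →+* ℂ[X]).mapMatrix R).det * ((C : ℂ →+* ℂ[X]).mapMatrix Q).det *
        (charmatrix A).det := by ring
    _ = (charmatrix A).det := by rw [this, one_mul]

lemma my_charpoly_blockDiagonal {o : Type*} [Fintype o] [DecidableEq o]
    (f : o → Matrix m m ℂ) :
    (blockDiagonal f).charpoly = ∏ i, (f i).charpoly := by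
  have h : charmatrix (blockDiagonal f) = blockDiagonal (fun i => charmatrix (f i)) := by
    ext ⟨a, i⟩ ⟨b, j⟩
    rcases eq_or_ne i j with rfl | hij
    · rcases eq_or_ne a b with rfl | hab
      · simp [blockDiagonal_apply_eq]
      · simp [charmatrix_apply, blockDiagonal_apply_eq, diagonal_apply, Prod.ext_iff, hab]
    · simp [charmatrix_apply, blockDiagonal_apply_ne _ _ _ hij, diagonal_apply,
        Prod.ext_iff, hij]
  rw [Matrix.charpoly, h, det_blockDiagonal]
  rfl

end Aux

/-- The eigenvalues of I_n ⊗ M + (E_n/n) ⊗ N, with multiplicity, are the eigenvalues of M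
(each with multiplicity n-1) together with those of M+N, expressed via charpoly. -/
theorem eigenvalues_kronecker_perturbation (n d : ℕ) (hn : 1 ≤ n)
    (M N : Matrix (Fin d) (Fin d) ℂ)
    (hM : ∃ P : Matrix (Fin d) (Fin d) ℂ, IsUnit P.det ∧ (P⁻¹ * M * P).IsDiag)
    (hMN : ∃ P : Matrix (Fin d) (Fin d) ℂ, IsUnit P.det ∧ (P⁻¹ * (M + N) * P).IsDiag) :
    ((1 : Matrix (Fin n) (Fin n) ℂ) ⊗ₖ M
        + ((n : ℂ)⁻¹ • Matrix.of (fun _ _ : Fin n => (1 : ℂ))) ⊗ₖ N).charpoly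
      = M.charpoly ^ (n - 1) * (M + N).charpoly := by
  haveI : NeZero n := ⟨by omega⟩
  have hn0 : (n : ℂ) ≠ 0 := by exact_mod_cast (by omega : n ≠ 0)
  set P : Matrix (Fin n) (Fin n) ℂ :=
    (n : ℂ)⁻¹ • Matrix.of (fun _ _ : Fin n => (1 : ℂ)) with hP
  set Q : Matrix (Fin n) (Fin n) ℂ :=
    Matrix.of (fun i j => if j = 0 then 1 else
      (if i = j then (1:ℂ) else 0) - (if i = 0 then 1 else 0)) with hQ
  set R : Matrix (Fin n) (Fin n) ℂ :=
    Matrix.of (fun i j => if i = 0 then (n:ℂ)⁻¹ else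
      (if i = j then (1:ℂ) else 0) - (n:ℂ)⁻¹) with hR
  set D : Matrix (Fin n) (Fin n) ℂ :=
    Matrix.of (fun i j => if i = 0 ∧ j = 0 then (1:ℂ) else 0) with hD
  -- column sums of Q
  have hcol : ∀ j : Fin n, (∑ k, Q k j) = if j = 0 then (n : ℂ) else 0 := by
    intro j
    rcases eq_or_ne j 0 with rfl | hj
    · simp [hQ, Finset.card_univ]
    · simp [hQ, hj, Finset.sum_sub_distrib]
  -- row sums of R
  have hrow : ∀ i : Fin n, (∑ k, R i k) = if i = 0 then (1 : ℂ) else 0 := by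
    intro i
    rcases eq_or_ne i 0 with rfl | hi
    · simp [hR, Finset.card_univ, mul_comm, hn0]
    · simp [hR, hi, Finset.sum_sub_distrib, Finset.card_univ, hn0]
  have hRQ : R * Q = 1 := by
    ext i j
    rw [mul_apply]
    rcases eq_or_ne i 0 with rfl | hi
    · have : ∀ k, R 0 k * Q k j = (n:ℂ)⁻¹ * Q k j := by intro k; simp [hR]
      simp_rw [this, ← Finset.mul_sum, hcol]
      rcases eq_or_ne j 0 with rfl | hj
      · simp [hn0]
      · simp [hj, Ne.symm hj, one_apply]
    · have : ∀ k, R i k * Q k j = (if i = k then (1:ℂ) else 0) * Q k j - (n:ℂ)⁻¹ * Q k j := by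
        intro k; simp only [hR, Matrix.of_apply, if_neg hi]; ring
      simp_rw [this, Finset.sum_sub_distrib, ← Finset.mul_sum, hcol, ite_mul, one_mul,
        zero_mul, Finset.sum_ite_eq]
      rcases eq_or_ne j 0 with rfl | hj
      · simp [hQ, hi, hn0, one_apply, Ne.symm]
      · simp [hQ, hj, hi, one_apply, eq_comm]
  have hPQ : P * Q = Matrix.of (fun _ j : Fin n => if j = 0 then (1:ℂ) else 0) := by
    ext i j
    rw [mul_apply]
    have : ∀ k, P i k * Q k j = (n:ℂ)⁻¹ * Q k j := by intro k; simp [hP]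
    simp_rw [this, ← Finset.mul_sum, hcol]
    rcases eq_or_ne j 0 with rfl | hj
    · simp [hn0]
    · simp [hj]
  have hRPQ : R * P * Q = D := by
    rw [Matrix.mul_assoc, hPQ]
    ext i j
    rw [mul_apply]
    have : ∀ k, R i k * (Matrix.of (fun _ j : Fin n => if j = 0 then (1:ℂ) else 0)) k j
        = (if j = 0 then (1:ℂ) else 0) * R i k := by intro k; simp [mul_comm]
    simp_rw [this, ← Finset.mul_sum, hrow]
    by_cases hi : i = 0 <;> by_cases hj : j = 0 <;> simp [hD, hi, hj]
  -- conjugation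
  have hker : (R ⊗ₖ (1 : Matrix (Fin d) (Fin d) ℂ)) *
      ((1 : Matrix (Fin n) (Fin n) ℂ) ⊗ₖ M + P ⊗ₖ N) *
      (Q ⊗ₖ (1 : Matrix (Fin d) (Fin d) ℂ)) = 1 ⊗ₖ M + D ⊗ₖ N := by
    rw [Matrix.mul_add, Matrix.add_mul, ← Matrix.mul_kronecker_mul, ← Matrix.mul_kronecker_mul,
      ← Matrix.mul_kronecker_mul, ← Matrix.mul_kronecker_mul, Matrix.mul_one, Matrix.one_mul,
      Matrix.one_mul, hRQ, hRPQ]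
    simp only [Matrix.mul_one]
  have hker1 : (R ⊗ₖ (1 : Matrix (Fin d) (Fin d) ℂ)) *
      (Q ⊗ₖ (1 : Matrix (Fin d) (Fin d) ℂ)) = 1 := by
    rw [← Matrix.mul_kronecker_mul, hRQ, Matrix.one_mul, Matrix.one_kronecker_one]
  have key : ((1 : Matrix (Fin n) (Fin n) ℂ) ⊗ₖ M + P ⊗ₖ N).charpoly
      = ((1 : Matrix (Fin n) (Fin n) ℂ) ⊗ₖ M + D ⊗ₖ N).charpoly := by
    rw [← hker, my_charpoly_conj _ _ _ hker1]
  rw [key]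
  -- block diagonal structure
  have hblock : (1 : Matrix (Fin n) (Fin n) ℂ) ⊗ₖ M + D ⊗ₖ N
      = reindex (Equiv.prodComm (Fin d) (Fin n)) (Equiv.prodComm (Fin d) (Fin n))
          (blockDiagonal (fun i : Fin n => if i = 0 then M + N else M)) := by
    ext ⟨i, a⟩ ⟨j, b⟩
    simp only [reindex_apply, submatrix_apply, Equiv.prodComm_symm, Equiv.prodComm_apply,
      Prod.swap_prod_mk, Matrix.add_apply, kroneckerMap_apply, one_apply, Matrix.of_apply, hD]
    rcases eq_or_ne i j with rfl | hij
    · rcases eq_or_ne i 0 with rfl | hi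
      · simp [blockDiagonal_apply_eq]
      · simp [blockDiagonal_apply_eq, hi]
    · have : ¬ (i = 0 ∧ j = 0) := by rintro ⟨rfl, rfl⟩; exact hij rfl
      simp [blockDiagonal_apply_ne _ _ _ hij, hij, this]
  rw [hblock, Matrix.charpoly_reindex, my_charpoly_blockDiagonal]
  have : ∀ i : Fin n, ((if i = 0 then M + N else M)).charpoly
      = if i = 0 then (M + N).charpoly else M.charpoly := by
    intro i; split <;> rfl
  simp_rw [this]
  have h0 : ∀ i ∈ Finset.univ.erase (0 : Fin n),
      (if i = 0 then (M + N).charpoly else M.charpoly) = M.charpoly := by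
    intro i hi
    simp [(Finset.mem_erase.mp hi).1]
  rw [← Finset.mul_prod_erase Finset.univ _ (Finset.mem_univ (0 : Fin n)),
    Finset.prod_congr rfl h0, Finset.prod_const, Finset.card_erase_of_mem (Finset.mem_univ _),
    Finset.card_univ, Fintype.card_fin, if_pos rfl, mul_comm]
end

section
/- Let X₁ = X̃₁ + X̂₁ where X̃₁ satisfies A'X̃₁ + X̃₁A − X̃₁ B R⁻¹ B' X̃₁ + Q = 0 and X₁ satisfies A'X₁ + X₁A − X₁ (B R⁻¹ B' − θW) X₁ + Q = 0. Then X_n = (1/n) I_n ⊗ X̃₁ + (1/n²) E_n ⊗ X̂₁ satisfies the generalized algebraic Riccati equation A_n' X + X A_n − X (n B_n R_n⁻¹ B_n' − θ W_n) X + (1/n) Q_n = 0, where A_n = I_n ⊗ A, B_n = I_n ⊗ B, R_n = I_n ⊗ R, Q_n = I_n ⊗ Q, W_n = E_n ⊗ W. -/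
open Matrix
open scoped Kronecker

/-- The n×n matrix of ones. -/
def onesMatrix (n : ℕ) : Matrix (Fin n) (Fin n) ℝ := Matrix.of fun _ _ => 1

lemma kron_transpose {m n p q : ℕ} (A : Matrix (Fin m) (Fin n) ℝ) (B : Matrix (Fin p) (Fin q) ℝ) :
    (A ⊗ₖ B)ᵀ = Aᵀ ⊗ₖ Bᵀ := (Matrix.kroneckerMap_transpose _ _ _).symm

lemma kron_sub {m n p q : ℕ} (A : Matrix (Fin m) (Fin n) ℝ) (B C : Matrix (Fin p) (Fin q) ℝ) :
    A ⊗ₖ (B - C) = A ⊗ₖ B - A ⊗ₖ C := by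
  ext ⟨i,i'⟩ ⟨j,j'⟩; simp [Matrix.kroneckerMap_apply, mul_sub]

lemma sub_kron {m n p q : ℕ} (A B : Matrix (Fin m) (Fin n) ℝ) (C : Matrix (Fin p) (Fin q) ℝ) :
    (A - B) ⊗ₖ C = A ⊗ₖ C - B ⊗ₖ C := by
  ext ⟨i,i'⟩ ⟨j,j'⟩; simp [Matrix.kroneckerMap_apply, sub_mul]

lemma ones_mul_ones (n : ℕ) : onesMatrix n * onesMatrix n = (n : ℝ) • onesMatrix n := by
  ext i j; simp [Matrix.mul_apply, onesMatrix]

/-- If X̃₁ solves the LQG Riccati equation and X₁ = X̃₁ + X̂₁ solves the risk-sensitive GARE for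
one agent, then X_n = (1/n) I_n ⊗ X̃₁ + (1/n²) E_n ⊗ X̂₁ solves the n-agent GARE. -/
theorem gare_n_agents (n d k : ℕ)
    (A : Matrix (Fin d) (Fin d) ℝ) (B : Matrix (Fin d) (Fin k) ℝ)
    (R : Matrix (Fin k) (Fin k) ℝ) (Q W X₁tilde X₁hat : Matrix (Fin d) (Fin d) ℝ)
    (θ : ℝ) (hR : IsUnit R.det) (hWsym : Wᵀ = W)
    (htilde : Aᵀ * X₁tilde + X₁tilde * A - X₁tilde * (B * R⁻¹ * Bᵀ) * X₁tilde + Q = 0)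
    (hfull : Aᵀ * (X₁tilde + X₁hat) + (X₁tilde + X₁hat) * A
      - (X₁tilde + X₁hat) * (B * R⁻¹ * Bᵀ - θ • W) * (X₁tilde + X₁hat) + Q = 0) :
    ((1 : Matrix (Fin n) (Fin n) ℝ) ⊗ₖ A)ᵀ
        * ((n : ℝ)⁻¹ • ((1 : Matrix (Fin n) (Fin n) ℝ) ⊗ₖ X₁tilde)
          + ((n : ℝ)^2)⁻¹ • (onesMatrix n ⊗ₖ X₁hat))
      + ((n : ℝ)⁻¹ • ((1 : Matrix (Fin n) (Fin n) ℝ) ⊗ₖ X₁tilde)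
          + ((n : ℝ)^2)⁻¹ • (onesMatrix n ⊗ₖ X₁hat)) * ((1 : Matrix (Fin n) (Fin n) ℝ) ⊗ₖ A)
      - ((n : ℝ)⁻¹ • ((1 : Matrix (Fin n) (Fin n) ℝ) ⊗ₖ X₁tilde)
          + ((n : ℝ)^2)⁻¹ • (onesMatrix n ⊗ₖ X₁hat))
        * ((n : ℝ) • (((1 : Matrix (Fin n) (Fin n) ℝ) ⊗ₖ B)
              * ((1 : Matrix (Fin n) (Fin n) ℝ) ⊗ₖ R)⁻¹
              * ((1 : Matrix (Fin n) (Fin n) ℝ) ⊗ₖ B)ᵀ)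
            - θ • (onesMatrix n ⊗ₖ W))
        * ((n : ℝ)⁻¹ • ((1 : Matrix (Fin n) (Fin n) ℝ) ⊗ₖ X₁tilde)
          + ((n : ℝ)^2)⁻¹ • (onesMatrix n ⊗ₖ X₁hat))
      + (n : ℝ)⁻¹ • ((1 : Matrix (Fin n) (Fin n) ℝ) ⊗ₖ Q) = 0 := by
  rcases Nat.eq_zero_or_pos n with hn | hn
  · subst hn; apply Subsingleton.elim
  have hm : (n : ℝ) ≠ 0 := Nat.cast_ne_zero.mpr hn.ne'
  have key : ((1 : Matrix (Fin n) (Fin n) ℝ) ⊗ₖ A)ᵀ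
        * ((n : ℝ)⁻¹ • ((1 : Matrix (Fin n) (Fin n) ℝ) ⊗ₖ X₁tilde)
          + ((n : ℝ)^2)⁻¹ • (onesMatrix n ⊗ₖ X₁hat))
      + ((n : ℝ)⁻¹ • ((1 : Matrix (Fin n) (Fin n) ℝ) ⊗ₖ X₁tilde)
          + ((n : ℝ)^2)⁻¹ • (onesMatrix n ⊗ₖ X₁hat)) * ((1 : Matrix (Fin n) (Fin n) ℝ) ⊗ₖ A)
      - ((n : ℝ)⁻¹ • ((1 : Matrix (Fin n) (Fin n) ℝ) ⊗ₖ X₁tilde)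
          + ((n : ℝ)^2)⁻¹ • (onesMatrix n ⊗ₖ X₁hat))
        * ((n : ℝ) • (((1 : Matrix (Fin n) (Fin n) ℝ) ⊗ₖ B)
              * ((1 : Matrix (Fin n) (Fin n) ℝ) ⊗ₖ R)⁻¹
              * ((1 : Matrix (Fin n) (Fin n) ℝ) ⊗ₖ B)ᵀ)
            - θ • (onesMatrix n ⊗ₖ W))
        * ((n : ℝ)⁻¹ • ((1 : Matrix (Fin n) (Fin n) ℝ) ⊗ₖ X₁tilde)
          + ((n : ℝ)^2)⁻¹ • (onesMatrix n ⊗ₖ X₁hat))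
      + (n : ℝ)⁻¹ • ((1 : Matrix (Fin n) (Fin n) ℝ) ⊗ₖ Q)
      = (n : ℝ)⁻¹ • ((1 : Matrix (Fin n) (Fin n) ℝ) ⊗ₖ
          (Aᵀ * X₁tilde + X₁tilde * A - X₁tilde * (B * R⁻¹ * Bᵀ) * X₁tilde + Q))
        + ((n : ℝ)⁻¹ * (n : ℝ)⁻¹) • (onesMatrix n ⊗ₖ
          ((Aᵀ * (X₁tilde + X₁hat) + (X₁tilde + X₁hat) * A
            - (X₁tilde + X₁hat) * (B * R⁻¹ * Bᵀ - θ • W) * (X₁tilde + X₁hat) + Q)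
           - (Aᵀ * X₁tilde + X₁tilde * A - X₁tilde * (B * R⁻¹ * Bᵀ) * X₁tilde + Q))) := by
    simp only [kron_transpose, Matrix.transpose_one, Matrix.inv_kronecker, inv_one,
      Matrix.mul_add, Matrix.add_mul, Matrix.mul_sub, Matrix.sub_mul,
      Matrix.smul_mul, Matrix.mul_smul, smul_smul, smul_add, smul_sub,
      Matrix.kronecker_add, Matrix.add_kronecker, kron_sub, sub_kron,
      Matrix.kronecker_smul, Matrix.smul_kronecker,
      ← Matrix.mul_kronecker_mul, Matrix.one_mul, Matrix.mul_one, ones_mul_ones,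
      sq, _root_.mul_inv_rev]
    match_scalars <;> field_simp <;> ring
  rw [key, htilde, hfull]
  simp
end
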